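/- Let p be a prime and n a positive integer. If (X+1)^n = X^n + 1 in the polynomial ring F_p[X], then n is a power of p, i.e., n = p^m for some integer m ≥ 0. -/

import Mathlib

open Polynomial

/-- If `(X+1)^n = X^n + 1` in `F_p[X]`, then `n` is a power of `p`. -/
theorem pow_eq_of_add_pow_char (p : ℕ) [Fact p.Prime] (n : ℕ) (hn : 0 < n)
    (h : (X + 1 : (ZMod p)[X]) ^ n = X ^ n + 1) :
    ∃ m : ℕ, n = p ^ m := by
  have hp := (Fact.out : p.Prime)
  induction n using Nat.strong_induction_on with
  | _ n ih =>
  rcases eq_or_lt_of_le (show 1 ≤ n from hn) with h1 | h1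
  · exact ⟨0, by simp [← h1]⟩
  · -- n ≥ 2; coefficient of X gives p ∣ n
    have hco := congrArg (fun q => Polynomial.coeff q 1) h
    simp only [coeff_X_add_one_pow, coeff_add, coeff_X_pow, coeff_one] at hco
    have hn1 : n ≠ 1 := by omega
    rw [if_neg (by omega), if_neg (by omega)] at hco
    have hdvd : p ∣ n := by
      have : ((n.choose 1 : ℕ) : ZMod p) = 0 := by simpa using hco
      rw [Nat.choose_one_right] at this
      exact (ZMod.natCast_eq_zero_iff n p).mp this
    obtain ⟨k, hk⟩ := hdvd
    have hk0 : 0 < k := by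
      rcases Nat.eq_zero_or_pos k with h0 | h0
      · subst h0; simp at hk; omega
      · exact h0
    have hchar : CharP ((ZMod p)[X]) p := inferInstance
    have hfe : ((X + 1 : (ZMod p)[X]) ^ k) ^ p = ((X ^ k + 1 : (ZMod p)[X])) ^ p := by
      have h2 : (X ^ k + 1 : (ZMod p)[X]) ^ p = (X ^ k) ^ p + 1 ^ p := add_pow_char _ _ _
      rw [h2, one_pow, ← pow_mul, ← pow_mul, mul_comm k p, ← hk, h]
    have heq : (X + 1 : (ZMod p)[X]) ^ k = X ^ k + 1 :=
      frobenius_inj ((ZMod p)[X]) p (by simpa [frobenius_def] using hfe)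
    have hklt : k < n := by
      have : 2 ≤ p := hp.two_le
      nlinarith
    obtain ⟨m, hm⟩ := ih k hklt hk0 heq
    exact ⟨m + 1, by rw [hk, hm, pow_succ]; ring⟩
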